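/- Let A and B be finite types and let k ≥ 2 be an integer. Then PPT#_k(A:B) ⊆ PPT_k(A:B). -/

import Mathlib

open Matrix
open scoped ComplexOrder

/-- Total positive semidefinite square root: the PSD square root of `M` if `M` is PSD,
and junk value `0` otherwise. -/
noncomputable def msqrt {n : Type*} [Fintype n] [DecidableEq n]
    (M : Matrix n n ℂ) : Matrix n n ℂ :=
  letI := Classical.dec M.PosSemidef
  if h : M.PosSemidef then
    (h.1.eigenvectorUnitary : Matrix n n ℂ) *
      diagonal ((↑) ∘ (h.1.eigenvalues · |>.sqrt)) *
      (star h.1.eigenvectorUnitary : Matrix n n ℂ) else 0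

/-- The trace norm `‖M‖₁ = tr √(Mᴴ M)` of a complex matrix, as a real number. -/
noncomputable def traceNorm {n : Type*} [Fintype n] [DecidableEq n]
    (M : Matrix n n ℂ) : ℝ :=
  (msqrt (Mᴴ * M)).trace.re

/-- The partial transpose over the second party `B`:
`M^{T_B}((a,b),(a',b')) = M((a,b'),(a',b))`. -/
def ptB {A B : Type*} (M : Matrix (A × B) (A × B) ℂ) : Matrix (A × B) (A × B) ℂ :=
  fun x y => M (x.1, y.2) (y.1, x.2)

/-- The matrix absolute value `|M| = √(Mᴴ M)`. -/
noncomputable def matAbs {n : Type*} [Fintype n] [DecidableEq n]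
    (M : Matrix n n ℂ) : Matrix n n ℂ :=
  msqrt (Mᴴ * M)

/-- The set `PPT#_k(A:B)`: positive semidefinite `ω₁` such that there exist `ω₂, …, ω_k` with
`|ω_i^{T_B}| ⪯ ω_{i+1}` for all `1 ≤ i ≤ k−1` and `‖ω_k^{T_B}‖₁ ≤ 1`. -/
def PPThashSet {A B : Type*} [Fintype A] [Fintype B] [DecidableEq A] [DecidableEq B]
    (k : ℕ) : Set (Matrix (A × B) (A × B) ℂ) :=
  {σ | σ.PosSemidef ∧ ∃ ω : ℕ → Matrix (A × B) (A × B) ℂ, ω 1 = σ ∧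
    (∀ i, 1 ≤ i → i ≤ k - 1 → (ω (i + 1) - matAbs (ptB (ω i))).PosSemidef) ∧
    traceNorm (ptB (ω k)) ≤ 1}

/-- The set `PPT_k(A:B)`: positive semidefinite `ω₁` such that there exist `ω₂, …, ω_k` with
`−ω_{i+1} ⪯ ω_i^{T_B} ⪯ ω_{i+1}` for all `1 ≤ i ≤ k−1` and `‖ω_k^{T_B}‖₁ ≤ 1`. -/
def PPTset {A B : Type*} [Fintype A] [Fintype B] [DecidableEq A] [DecidableEq B]
    (k : ℕ) : Set (Matrix (A × B) (A × B) ℂ) :=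
  {σ | σ.PosSemidef ∧ ∃ ω : ℕ → Matrix (A × B) (A × B) ℂ, ω 1 = σ ∧
    (∀ i, 1 ≤ i → i ≤ k - 1 →
      (ω (i + 1) - ptB (ω i)).PosSemidef ∧ (ω (i + 1) + ptB (ω i)).PosSemidef) ∧
    traceNorm (ptB (ω k)) ≤ 1}

lemma msqrt_posSemidef {n : Type*} [Fintype n] [DecidableEq n]
    (M : Matrix n n ℂ) : (msqrt M).PosSemidef := by
  unfold msqrt
  split
  · exact (Matrix.posSemidef_diagonal_iff.mpr fun i =>
      Complex.zero_le_real.mpr (Real.sqrt_nonneg _)).mul_mul_conjTranspose_same _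
  · exact Matrix.PosSemidef.zero

open scoped MatrixOrder in
lemma msqrt_eq_cfc_sqrt {n : Type*} [Fintype n] [DecidableEq n]
    {M : Matrix n n ℂ} (h : M.PosSemidef) : msqrt M = CFC.sqrt M := by
  rw [CFC.sqrt_eq_cfc, cfc_nnreal_eq_real _ M, h.1.cfc_eq]
  unfold msqrt
  rw [dif_pos h]
  simp only [IsHermitian.cfc, Real.coe_sqrt, Real.coe_toNNReal', Unitary.conjStarAlgAut_apply]
  congr 3
  ext i
  simp [max_eq_left (h.eigenvalues_nonneg i)]

lemma matAbs_posSemidef {n : Type*} [Fintype n] [DecidableEq n]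
    (M : Matrix n n ℂ) : (matAbs M).PosSemidef :=
  msqrt_posSemidef _

lemma ptB_isHermitian {A B : Type*} {M : Matrix (A × B) (A × B) ℂ}
    (hM : M.IsHermitian) : (ptB M).IsHermitian := by
  ext ⟨a, b⟩ ⟨a', b'⟩
  have := congrFun (congrFun hM (a, b')) (a', b)
  simpa [ptB, Matrix.conjTranspose_apply] using this

open scoped MatrixOrder in
/-- For Hermitian `M`, both `|M| - M` and `|M| + M` are positive semidefinite. -/
lemma matAbs_sub_add {n : Type*} [Fintype n] [DecidableEq n]
    {M : Matrix n n ℂ} (hM : M.IsHermitian) :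
    (matAbs M - M).PosSemidef ∧ (matAbs M + M).PosSemidef := by
  set U : Matrix n n ℂ := (hM.eigenvectorUnitary : Matrix n n ℂ) with hU
  set d : n → ℝ := hM.eigenvalues with hd
  have hUU : Uᴴ * U = 1 := by
    rw [← Matrix.star_eq_conjTranspose]
    exact (Matrix.mem_unitaryGroup_iff').mp hM.eigenvectorUnitary.2
  have hspec : M = U * Matrix.diagonal (RCLike.ofReal ∘ d) * Uᴴ := by
    simpa [Matrix.star_eq_conjTranspose] using hM.spectral_theorem
  set N : Matrix n n ℂ := U * Matrix.diagonal (fun i => ((|d i| : ℝ) : ℂ)) * Uᴴ with hN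
  have hNpsd : N.PosSemidef := by
    refine (Matrix.posSemidef_diagonal_iff.mpr fun i => ?_).mul_mul_conjTranspose_same U
    exact Complex.zero_le_real.mpr (abs_nonneg (d i))
  have hdiagmul : ∀ (f g : n → ℂ),
      (U * Matrix.diagonal f * Uᴴ) * (U * Matrix.diagonal g * Uᴴ)
        = U * Matrix.diagonal (f * g) * Uᴴ := by
    intro f g
    simp only [Matrix.mul_assoc]
    rw [← Matrix.mul_assoc Uᴴ U, hUU, Matrix.one_mul,
      ← Matrix.mul_assoc (Matrix.diagonal f) (Matrix.diagonal g) Uᴴ,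
      Matrix.diagonal_mul_diagonal]
    rfl
  have hsq : N ^ 2 = Mᴴ * M := by
    rw [hM.eq, pow_two, hN, hspec, hdiagmul, hdiagmul]
    congr 1
    ext i
    simp [Function.comp, ← Complex.ofReal_mul, abs_mul_abs_self]
  have hPSD : (Mᴴ * M).PosSemidef := Matrix.posSemidef_conjTranspose_mul_self M
  have habs : matAbs M = N := by
    have h1 : matAbs M = CFC.sqrt (Mᴴ * M) := msqrt_eq_cfc_sqrt hPSD
    rw [h1]
    exact CFC.sqrt_unique (a := Mᴴ * M) (b := N) ((pow_two N).symm.trans hsq)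
      (Matrix.nonneg_iff_posSemidef.mpr hNpsd)
  constructor
  · have : matAbs M - M = U * Matrix.diagonal (fun i => ((|d i| - d i : ℝ) : ℂ)) * Uᴴ := by
      rw [habs, hN, hspec, ← Matrix.sub_mul, ← Matrix.mul_sub, Matrix.diagonal_sub]
      congr 1
      ext i
      push_cast
      simp [Function.comp]
    rw [this]
    refine (Matrix.posSemidef_diagonal_iff.mpr fun i => ?_).mul_mul_conjTranspose_same U
    exact Complex.zero_le_real.mpr (by simpa using le_abs_self (d i))
  · have : matAbs M + M = U * Matrix.diagonal (fun i => ((|d i| + d i : ℝ) : ℂ)) * Uᴴ := by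
      rw [habs, hN, hspec, ← Matrix.add_mul, ← Matrix.mul_add, Matrix.diagonal_add]
      congr 1
      ext i
      push_cast
      simp [Function.comp]
    rw [this]
    refine (Matrix.posSemidef_diagonal_iff.mpr fun i => ?_).mul_mul_conjTranspose_same U
    exact Complex.zero_le_real.mpr (by linarith [neg_abs_le (d i)])

theorem PPThashSet_subset_PPTset {A B : Type*}
    [Fintype A] [Fintype B] [DecidableEq A] [DecidableEq B]
    (k : ℕ) (hk : 2 ≤ k) :
    PPThashSet (A := A) (B := B) k ⊆ PPTset (A := A) (B := B) k := by
  rintro σ ⟨hσ, ω, hω1, hstep, htr⟩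
  refine ⟨hσ, ω, hω1, ?_, htr⟩
  have herm : ∀ i, 1 ≤ i → i ≤ k - 1 → (ω i).IsHermitian := by
    intro i
    induction i with
    | zero => omega
    | succ n ih =>
      intro _ h2
      rcases Nat.eq_zero_or_pos n with hn | hn
      · subst hn
        rw [hω1]
        exact hσ.1
      · have hn2 : n ≤ k - 1 := by omega
        have hprev := hstep n hn hn2
        have : ω (n + 1) = (ω (n + 1) - matAbs (ptB (ω n))) + matAbs (ptB (ω n)) := by
          abel
        rw [this]
        exact hprev.1.add (matAbs_posSemidef _).1
  intro i h1 h2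
  have hH : (ptB (ω i)).IsHermitian := ptB_isHermitian (herm i h1 h2)
  obtain ⟨hs, ha⟩ := matAbs_sub_add hH
  have hstep' := hstep i h1 h2
  constructor
  · have : ω (i + 1) - ptB (ω i)
        = (ω (i + 1) - matAbs (ptB (ω i))) + (matAbs (ptB (ω i)) - ptB (ω i)) := by abel
    rw [this]
    exact hstep'.add hs
  · have : ω (i + 1) + ptB (ω i)
        = (ω (i + 1) - matAbs (ptB (ω i))) + (matAbs (ptB (ω i)) + ptB (ω i)) := by abel
    rw [this]
    exact hstep'.add ha
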